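/- arXiv:1409.4850 — 5 statements merged into one kernel-verified Lean document; each statement's English description precedes it below -/
import Mathlib

section
/- For an admissible set of hyperplanes a_1, ..., a_k in P^n with intersection X = a_1 ∩ ... ∩ a_k, there exist positive constants C_1, C_2 (depending only on the hyperplanes) such that for all w ∈ P^n: C_1 · max_{1≤j≤k} dist(w, a_j) ≤ dist(w, X) ≤ C_2 · max_{1≤j≤k} dist(w, a_j). -/
open scoped InnerProductSpace

/-- Points of `P^n` are represented by unit vectors `f ∈ ℂ^{n+1}`.  A hyperplane `a_j` is
defined by a unit vector `α j`, and the chordal distance from `[f]` to `a_j` is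
`‖⟪α j, f⟫‖`.  For an admissible family (the `α j` linearly independent), the flat
`X = a_1 ∩ ... ∩ a_k` is the projectivization of `(span α)ᗮ`, and the chordal distance
from `[f]` to `X` is the norm of the orthogonal projection of `f` onto `span α`.
The statement: `dist(w, X)` is comparable, with constants depending only on the
hyperplanes, to `max_j dist(w, a_j)`. -/
theorem stmt_9 {n k : ℕ} (hk : 0 < k) (hkn : k ≤ n)
    (α : Fin k → EuclideanSpace ℂ (Fin (n + 1)))
    (hunit : ∀ j, ‖α j‖ = 1) (hli : LinearIndependent ℂ α) :
    ∃ C₁ > (0 : ℝ), ∃ C₂ > (0 : ℝ),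
      ∀ f : EuclideanSpace ℂ (Fin (n + 1)), ‖f‖ = 1 →
        C₁ * ((Finset.univ.sup' ⟨⟨0, hk⟩, Finset.mem_univ _⟩
              fun j => ‖⟪α j, f⟫_ℂ‖))
            ≤ ‖(Submodule.orthogonalProjectionOnto (Submodule.span ℂ (Set.range α)) f :
                EuclideanSpace ℂ (Fin (n + 1)))‖ ∧
        ‖(Submodule.orthogonalProjectionOnto (Submodule.span ℂ (Set.range α)) f :
                EuclideanSpace ℂ (Fin (n + 1)))‖
            ≤ C₂ * ((Finset.univ.sup' ⟨⟨0, hk⟩, Finset.mem_univ _⟩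
              fun j => ‖⟪α j, f⟫_ℂ‖)) := by
  classical
  set S : Submodule ℂ (EuclideanSpace ℂ (Fin (n + 1))) := Submodule.span ℂ (Set.range α) with hS
  haveI : FiniteDimensional ℂ S := FiniteDimensional.span_of_finite ℂ (Set.finite_range α)
  set T : S →ₗ[ℂ] (Fin k → ℂ) :=
    LinearMap.pi (fun j => ((innerSL ℂ (α j)).toLinearMap).comp S.subtype) with hT
  have hTapp : ∀ (v : S) (j : Fin k), T v j = ⟪α j, (v : EuclideanSpace ℂ (Fin (n + 1)))⟫_ℂ := fun v j => rfl
  have hTker : LinearMap.ker T = ⊥ := by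
    rw [LinearMap.ker_eq_bot']
    intro v hv
    have hvz : ∀ j, ⟪α j, (v : EuclideanSpace ℂ (Fin (n + 1)))⟫_ℂ = 0 := by
      intro j
      have := congrFun hv j
      simpa [hTapp] using this
    have hvo : (v : EuclideanSpace ℂ (Fin (n + 1))) ∈ Sᗮ := by
      rw [Submodule.mem_orthogonal]
      intro u hu
      rw [hS] at hu
      induction hu using Submodule.span_induction with
      | mem x hx => obtain ⟨j, rfl⟩ := hx; exact hvz j
      | zero => simp
      | add x y _ _ hx hy => rw [inner_add_left, hx, hy, add_zero]
      | smul c x _ hx => rw [inner_smul_left, hx, mul_zero]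
    have : (v : EuclideanSpace ℂ (Fin (n + 1))) = 0 := by
      have : (v : EuclideanSpace ℂ (Fin (n + 1))) ∈ S ⊓ Sᗮ := Submodule.mem_inf.mpr ⟨v.2, hvo⟩
      rwa [Submodule.inf_orthogonal_eq_bot, Submodule.mem_bot] at this
    exact Subtype.ext this
  obtain ⟨K, hK0, hKa⟩ := T.exists_antilipschitzWith hTker
  refine ⟨1, one_pos, (K : ℝ), hK0, fun f hf => ?_⟩
  set v : S := Submodule.orthogonalProjectionOnto S f with hv
  have hinner : ∀ j, ⟪α j, (v : EuclideanSpace ℂ (Fin (n + 1)))⟫_ℂ = ⟪α j, f⟫_ℂ := by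
    intro j
    have hj : α j ∈ S := Submodule.subset_span ⟨j, rfl⟩
    have horth : f - (v : EuclideanSpace ℂ (Fin (n + 1))) ∈ Sᗮ := Submodule.sub_starProjection_mem_orthogonal (K := S) f
    have := Submodule.inner_right_of_mem_orthogonal hj horth
    rw [inner_sub_right] at this
    exact (sub_eq_zero.mp this).symm
  set M : ℝ := Finset.univ.sup' ⟨⟨0, hk⟩, Finset.mem_univ _⟩ fun j => ‖⟪α j, f⟫_ℂ‖ with hM
  have hM0 : 0 ≤ M :=
    le_trans (norm_nonneg _) (Finset.le_sup' (fun j => ‖⟪α j, f⟫_ℂ‖) (Finset.mem_univ ⟨0, hk⟩))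
  constructor
  · rw [one_mul]
    refine Finset.sup'_le _ _ fun j _ => ?_
    calc ‖⟪α j, f⟫_ℂ‖ = ‖⟪α j, (v : EuclideanSpace ℂ (Fin (n + 1)))⟫_ℂ‖ := by rw [hinner]
      _ ≤ ‖α j‖ * ‖(v : EuclideanSpace ℂ (Fin (n + 1)))‖ := norm_inner_le_norm _ _
      _ = ‖(v : EuclideanSpace ℂ (Fin (n + 1)))‖ := by rw [hunit j, one_mul]
  · have h1 : ‖v‖ ≤ (K : ℝ) * ‖T v‖ := by
      have := hKa.le_mul_dist v 0
      simpa [dist_eq_norm] using this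
    have h2 : ‖T v‖ ≤ M := by
      refine (pi_norm_le_iff_of_nonneg hM0).mpr fun j => ?_
      rw [hTapp, hinner]
      exact Finset.le_sup' (fun j => ‖⟪α j, f⟫_ℂ‖) (Finset.mem_univ j)
    have hnv : ‖(v : EuclideanSpace ℂ (Fin (n + 1)))‖ = ‖v‖ := rfl
    calc ‖(v : EuclideanSpace ℂ (Fin (n + 1)))‖ = ‖v‖ := hnv
      _ ≤ (K : ℝ) * ‖T v‖ := h1
      _ ≤ (K : ℝ) * M := by
          exact mul_le_mul_of_nonneg_left h2 (le_of_lt (by exact_mod_cast hK0))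
end

section
/- Lemma 1 of the paper: Let A be a finite complete set of hyperplanes in P^n (i.e., the defining vectors of the hyperplanes in A span ℂ^{n+1}). For w ∈ P^n, let d_k(w) be the shortest chordal distance from w to a flat of codimension k generated by A (an intersection of hyperplanes from A of codimension k). Then there exists C > 0 such that for every w ∈ P^n: ∏_{k=1}^{n} d_k(w) ≥ C · min_B ∏_{a∈B} dist(w, a), where the minimum is over all admissible subsets B ⊆ A of cardinality n+1. -/
set_option maxHeartbeats 1000000


open scoped InnerProductSpace

lemma aux_proj_bound {m : ℕ} (S : Finset (EuclideanSpace ℂ (Fin m)))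
    (a w : EuclideanSpace ℂ (Fin m)) (ha : a ∈ S) (ha1 : ‖a‖ = 1) :
    ‖⟪a, w⟫_ℂ‖ ≤ ‖(Submodule.orthogonalProjectionOnto (Submodule.span ℂ (S : Set (EuclideanSpace ℂ (Fin m)))) w :
      EuclideanSpace ℂ (Fin m))‖ := by
  set K := Submodule.span ℂ (S : Set (EuclideanSpace ℂ (Fin m)))
  set p : EuclideanSpace ℂ (Fin m) := (Submodule.orthogonalProjectionOnto K w : EuclideanSpace ℂ (Fin m))
  have haK : a ∈ K := Submodule.subset_span ha
  have h1 : ⟪a, w - p⟫_ℂ = 0 :=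
    (Submodule.mem_orthogonal K _).1 (Submodule.sub_starProjection_mem_orthogonal (K := K) w) a haK
  have h2 : ⟪a, w⟫_ℂ = ⟪a, p⟫_ℂ := by
    rw [inner_sub_right] at h1
    linear_combination h1
  rw [h2]
  calc ‖⟪a, p⟫_ℂ‖ ≤ ‖a‖ * ‖p‖ := norm_inner_le_norm a p
    _ = ‖p‖ := by rw [ha1, one_mul]


lemma aux_greedy {n : ℕ} (A : Finset (EuclideanSpace ℂ (Fin (n+1))))
    (hAspan : Submodule.span ℂ (A : Set (EuclideanSpace ℂ (Fin (n+1)))) = ⊤)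
    (w : EuclideanSpace ℂ (Fin (n+1))) :
    ∀ k : ℕ, k ≤ n + 1 → ∃ b : ℕ → EuclideanSpace ℂ (Fin (n+1)),
      (∀ i < k, b i ∈ A) ∧
      LinearIndependent ℂ (fun i : Fin k => b i) ∧
      (∀ i < k, ∀ a ∈ A, a ∉ Submodule.span ℂ (b '' Set.Iio i) →
        ‖⟪b i, w⟫_ℂ‖ ≤ ‖⟪a, w⟫_ℂ‖) := by
  classical
  intro k
  induction k with
  | zero =>
    exact fun _ => ⟨fun _ => 0, by simp, linearIndependent_empty_type, by simp⟩
  | succ k ih =>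
    intro hk
    obtain ⟨b, hb1, hb2, hb3⟩ := ih (Nat.le_of_succ_le hk)
    have hrange : Set.range (fun i : Fin k => b i) = b '' Set.Iio k := by
      ext x
      constructor
      · rintro ⟨i, rfl⟩; exact ⟨i, i.isLt, rfl⟩
      · rintro ⟨j, hj, rfl⟩; exact ⟨⟨j, hj⟩, rfl⟩
    set V := Submodule.span ℂ (b '' Set.Iio k) with hV
    have hVrank : Module.finrank ℂ V ≤ k := by
      have himg : b '' Set.Iio k = (((Finset.range k).image b : Finset _) : Set _) := by
        rw [Finset.coe_image, Finset.coe_range]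
      calc Module.finrank ℂ V ≤ ((Finset.range k).image b).card := by
            rw [hV, himg]; exact finrank_span_finset_le_card _
        _ ≤ k := le_trans (Finset.card_image_le) (by simp)
    have hex : ∃ a ∈ A, a ∉ V := by
      by_contra h
      push_neg at h
      have : (⊤ : Submodule ℂ (EuclideanSpace ℂ (Fin (n+1)))) ≤ V := by
        rw [← hAspan]; exact Submodule.span_le.2 h
      have hVtop : V = ⊤ := top_le_iff.1 this
      have : Module.finrank ℂ V = n + 1 := by
        rw [hVtop, finrank_top]; exact finrank_euclideanSpace_fin
      omega
    set T := A.filter (fun a => a ∉ V) with hT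
    have hTne : T.Nonempty := by
      obtain ⟨a, ha, hav⟩ := hex
      exact ⟨a, Finset.mem_filter.2 ⟨ha, hav⟩⟩
    obtain ⟨a₀, ha₀T, ha₀min⟩ := T.exists_min_image (fun a => ‖⟪a, w⟫_ℂ‖) hTne
    have ha₀A : a₀ ∈ A := (Finset.mem_filter.1 ha₀T).1
    have ha₀V : a₀ ∉ V := (Finset.mem_filter.1 ha₀T).2
    refine ⟨fun i => if i = k then a₀ else b i, ?_, ?_, ?_⟩
    · intro i hi
      by_cases h : i = k
      · simpa [h] using ha₀A
      · simpa [h] using hb1 i (by omega)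
    · have hsnoc : (fun i : Fin (k+1) => if (i : ℕ) = k then a₀ else b i) =
          Fin.snoc (fun i : Fin k => b i) a₀ := by
        funext i
        induction i using Fin.lastCases with
        | last => simp [Fin.snoc_last]
        | cast j =>
          have hj : (j : ℕ) ≠ k := by have := j.isLt; omega
          simp [Fin.snoc_castSucc, hj]
      rw [hsnoc, linearIndependent_fin_snoc]
      exact ⟨hb2, by rwa [hrange]⟩
    · intro i hi a ha hnot
      have himeq : ∀ j ≤ k, (fun i => if i = k then a₀ else b i) '' Set.Iio j = b '' Set.Iio j := by
        intro j hj
        apply Set.image_congr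
        intro x hx
        have : x ≠ k := by simp at hx; omega
        simp [this]
      by_cases h : i = k
      · rw [h, himeq k le_rfl] at hnot
        have haT : a ∈ T := Finset.mem_filter.2 ⟨ha, hnot⟩
        simpa [h] using ha₀min a haT
      · have hik : i < k := by omega
        rw [himeq i (by omega)] at hnot
        have : i ≠ k := h
        simpa [this] using hb3 i hik a ha hnot


/-- Lemma 1.  Points of `P^n` are represented by unit vectors `w ∈ ℂ^{n+1}` and hyperplanes
by unit normal vectors `a ∈ A`; `dist(w, a) = ‖⟪a, w⟫‖`.  A flat of codimension `k`
generated by `A` is cut out by an admissible (linearly independent) subset `S ⊆ A` of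
cardinality `k`, and the chordal distance from `[w]` to it is the norm of the orthogonal
projection of `w` onto `span S`; `d_k(w)` is the infimum of these distances over all such
`S`.  Then there is `C > 0` with
`∏_{k=1}^n d_k(w) ≥ C · min_B ∏_{a ∈ B} dist(w, a)`, the minimum being over all
admissible subsets `B ⊆ A` of cardinality `n+1`. -/
theorem stmt_10 {n : ℕ} (A : Finset (EuclideanSpace ℂ (Fin (n + 1))))
    (hA1 : ∀ a ∈ A, ‖a‖ = 1)
    (hAspan : Submodule.span ℂ (A : Set (EuclideanSpace ℂ (Fin (n + 1)))) = ⊤) :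
    ∃ C > (0 : ℝ), ∀ w : EuclideanSpace ℂ (Fin (n + 1)), ‖w‖ = 1 →
      (∏ k ∈ Finset.Icc 1 n,
        sInf {r : ℝ | ∃ S : Finset (EuclideanSpace ℂ (Fin (n + 1))),
          S ⊆ A ∧ S.card = k ∧
          LinearIndependent ℂ (Subtype.val :
            ↥(S : Set (EuclideanSpace ℂ (Fin (n + 1)))) → EuclideanSpace ℂ (Fin (n + 1))) ∧
          r = ‖(Submodule.orthogonalProjectionOnto
              (Submodule.span ℂ (S : Set (EuclideanSpace ℂ (Fin (n + 1))))) w :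
              EuclideanSpace ℂ (Fin (n + 1)))‖})
      ≥ C * sInf {r : ℝ | ∃ B : Finset (EuclideanSpace ℂ (Fin (n + 1))),
          B ⊆ A ∧ B.card = n + 1 ∧
          LinearIndependent ℂ (Subtype.val :
            ↥(B : Set (EuclideanSpace ℂ (Fin (n + 1)))) → EuclideanSpace ℂ (Fin (n + 1))) ∧
          r = ∏ a ∈ B, ‖⟪a, w⟫_ℂ‖} := by
  classical
  refine ⟨1, one_pos, ?_⟩
  intro w hw
  obtain ⟨b, hb1, hb2, hb3⟩ := aux_greedy A hAspan w (n + 1) le_rfl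
  have hinj : Function.Injective (fun i : Fin (n+1) => b i) := hb2.injective
  have hinjOn : ∀ m : ℕ, m ≤ n + 1 → ∀ x ∈ Finset.range m, ∀ y ∈ Finset.range m,
      b x = b y → x = y := by
    intro m hm x hx y hy h
    simp only [Finset.mem_range] at hx hy
    have := hinj (a₁ := ⟨x, by omega⟩) (a₂ := ⟨y, by omega⟩) h
    simpa using congrArg Fin.val this
  -- the big admissible set B
  set B : Finset (EuclideanSpace ℂ (Fin (n+1))) := (Finset.range (n+1)).image b with hB
  have hBsub : B ⊆ A := by
    intro x hx
    obtain ⟨i, hi, rfl⟩ := Finset.mem_image.1 hx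
    exact hb1 i (Finset.mem_range.1 hi)
  have hBcard : B.card = n + 1 := by
    rw [hB, Finset.card_image_of_injOn, Finset.card_range]
    intro x hx y hy h
    exact hinjOn (n+1) le_rfl x hx y hy h
  have hBset : (B : Set (EuclideanSpace ℂ (Fin (n+1)))) =
      Set.range (fun i : Fin (n+1) => b i) := by
    ext x
    simp only [hB, Finset.coe_image, Finset.coe_range, Set.mem_image, Set.mem_Iio,
      Set.mem_range]
    constructor
    · rintro ⟨j, hj, rfl⟩; exact ⟨⟨j, hj⟩, rfl⟩
    · rintro ⟨i, rfl⟩; exact ⟨i, i.isLt, rfl⟩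
  have hBind : LinearIndependent ℂ (Subtype.val :
      ↥(B : Set (EuclideanSpace ℂ (Fin (n + 1)))) → EuclideanSpace ℂ (Fin (n + 1))) := by
    rw [hBset]; exact hb2.linearIndepOn_id
  have hprodB : ∏ a ∈ B, ‖⟪a, w⟫_ℂ‖ = ∏ i ∈ Finset.range (n+1), ‖⟪b i, w⟫_ℂ‖ :=
    Finset.prod_image (hinjOn (n+1) le_rfl)
  -- the RHS inf is at most the product over B
  have hRHS : sInf {r : ℝ | ∃ B' : Finset (EuclideanSpace ℂ (Fin (n + 1))),
          B' ⊆ A ∧ B'.card = n + 1 ∧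
          LinearIndependent ℂ (Subtype.val :
            ↥(B' : Set (EuclideanSpace ℂ (Fin (n + 1)))) → EuclideanSpace ℂ (Fin (n + 1))) ∧
          r = ∏ a ∈ B', ‖⟪a, w⟫_ℂ‖} ≤ ∏ a ∈ B, ‖⟪a, w⟫_ℂ‖ := by
    apply csInf_le
    · refine ⟨0, ?_⟩
      rintro r ⟨B', _, _, _, rfl⟩
      exact Finset.prod_nonneg fun a _ => norm_nonneg _
    · exact ⟨B, hBsub, hBcard, hBind, rfl⟩
  -- key: d_k(w) ≥ ‖⟪b (k-1), w⟫‖ for k ∈ [1, n]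
  have hkey : ∀ k ∈ Finset.Icc 1 n,
      ‖⟪b (k-1), w⟫_ℂ‖ ≤ sInf {r : ℝ | ∃ S : Finset (EuclideanSpace ℂ (Fin (n + 1))),
          S ⊆ A ∧ S.card = k ∧
          LinearIndependent ℂ (Subtype.val :
            ↥(S : Set (EuclideanSpace ℂ (Fin (n + 1)))) → EuclideanSpace ℂ (Fin (n + 1))) ∧
          r = ‖(Submodule.orthogonalProjectionOnto
              (Submodule.span ℂ (S : Set (EuclideanSpace ℂ (Fin (n + 1))))) w :
              EuclideanSpace ℂ (Fin (n + 1)))‖} := by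
    intro k hk
    rw [Finset.mem_Icc] at hk
    apply le_csInf
    · -- nonempty: take the first k greedy vectors
      refine ⟨_, (Finset.range k).image b, ?_, ?_, ?_, rfl⟩
      · intro x hx
        obtain ⟨i, hi, rfl⟩ := Finset.mem_image.1 hx
        exact hb1 i (by simp at hi; omega)
      · rw [Finset.card_image_of_injOn, Finset.card_range]
        intro x hx y hy h
        exact hinjOn k (by omega) x hx y hy h
      · refine LinearIndepOn.mono hb2.linearIndepOn_id ?_
        intro x hx
        simp only [Finset.coe_image, Finset.coe_range, Set.mem_image, Set.mem_Iio] at hx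
        obtain ⟨j, hj, rfl⟩ := hx
        exact ⟨⟨j, by omega⟩, rfl⟩
    · rintro r ⟨S, hSsub, hScard, hSind, rfl⟩
      -- find a ∈ S outside span of the first k-1 greedy vectors
      have hexa : ∃ a ∈ S, a ∉ Submodule.span ℂ (b '' Set.Iio (k-1)) := by
        by_contra h
        push_neg at h
        have hle : Submodule.span ℂ (S : Set (EuclideanSpace ℂ (Fin (n+1)))) ≤
            Submodule.span ℂ (b '' Set.Iio (k-1)) := Submodule.span_le.2 h
        have h1 : Module.finrank ℂ
            (Submodule.span ℂ (S : Set (EuclideanSpace ℂ (Fin (n+1))))) = k := by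
          rw [finrank_span_finset_eq_card hSind, hScard]
        have h2 : Module.finrank ℂ (Submodule.span ℂ (b '' Set.Iio (k-1))) ≤ k - 1 := by
          have himg : b '' Set.Iio (k-1) =
              (((Finset.range (k-1)).image b : Finset _) : Set _) := by
            rw [Finset.coe_image, Finset.coe_range]
          have h3 := finrank_span_finset_le_card (R := ℂ) ((Finset.range (k-1)).image b)
          unfold Set.finrank at h3
          rw [himg]
          exact le_trans h3 (le_trans Finset.card_image_le (by simp))
        have := Submodule.finrank_mono hle
        omega
      obtain ⟨a, haS, hanot⟩ := hexa
      calc ‖⟪b (k-1), w⟫_ℂ‖ ≤ ‖⟪a, w⟫_ℂ‖ :=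
            hb3 (k-1) (by omega) a (hSsub haS) hanot
        _ ≤ _ := aux_proj_bound S a w haS (hA1 a (hSsub haS))
  -- assemble
  rw [ge_iff_le, one_mul]
  have hIcc : ∏ k ∈ Finset.Icc 1 n, ‖⟪b (k-1), w⟫_ℂ‖ =
      ∏ i ∈ Finset.range n, ‖⟪b i, w⟫_ℂ‖ := by
    rw [← Finset.Ico_add_one_right_eq_Icc, Finset.prod_Ico_eq_prod_range]
    simp
  have hlast : ‖⟪b n, w⟫_ℂ‖ ≤ 1 := by
    calc ‖⟪b n, w⟫_ℂ‖ ≤ ‖b n‖ * ‖w‖ := norm_inner_le_norm _ _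
      _ = 1 := by rw [hA1 (b n) (hb1 n (by omega)), hw, one_mul]
  calc sInf {r : ℝ | ∃ B' : Finset (EuclideanSpace ℂ (Fin (n + 1))),
          B' ⊆ A ∧ B'.card = n + 1 ∧
          LinearIndependent ℂ (Subtype.val :
            ↥(B' : Set (EuclideanSpace ℂ (Fin (n + 1)))) → EuclideanSpace ℂ (Fin (n + 1))) ∧
          r = ∏ a ∈ B', ‖⟪a, w⟫_ℂ‖}
      ≤ ∏ a ∈ B, ‖⟪a, w⟫_ℂ‖ := hRHS
    _ = ∏ i ∈ Finset.range (n+1), ‖⟪b i, w⟫_ℂ‖ := hprodB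
    _ ≤ ∏ i ∈ Finset.range n, ‖⟪b i, w⟫_ℂ‖ := by
        rw [Finset.prod_range_succ]
        exact mul_le_of_le_one_right (Finset.prod_nonneg fun _ _ => norm_nonneg _) hlast
    _ = ∏ k ∈ Finset.Icc 1 n, ‖⟪b (k-1), w⟫_ℂ‖ := hIcc.symm
    _ ≤ _ := Finset.prod_le_prod (fun _ _ => norm_nonneg _) hkey
end

section
/- Proposition (pointwise version): Let α_1, ..., α_q ∈ ℂ^{n+1} (q ≥ n+1) be unit vectors, any n+1 of which are linearly independent, defining hyperplanes a_1,...,a_q in P^n. Fix w ∈ P^n not lying on any a_j. Order indices so that dist(w, a_{j_1}) ≤ ... ≤ dist(w, a_{j_q}). Then there is a constant C > 0 depending only on the hyperplanes (not on w) such that Σ_{m=1}^{q} log(1/dist(w, a_{j_m})) ≤ Σ_{k=1}^{n} log(1/dist(w, x_k)) + C, where x_k = a_{j_1} ∩ ... ∩ a_{j_k}. -/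
open scoped InnerProductSpace

private lemma exists_key {E : Type*} [NormedAddCommGroup E] [InnerProductSpace ℂ E]
    [FiniteDimensional ℂ E] {ι : Type*} [Fintype ι] [Nonempty ι] (g : ι → E) :
    ∃ K : ℝ, 1 ≤ K ∧ ∀ v ∈ Submodule.span ℂ (Set.range g), ∃ i, ‖v‖ ≤ K * ‖⟪g i, v⟫_ℂ‖ := by
  set W := Submodule.span ℂ (Set.range g) with hW
  let Φ : W →ₗ[ℂ] (ι → ℂ) :=
    { toFun := fun v => fun i => ⟪g i, (v : E)⟫_ℂ
      map_add' := by intro x y; funext i; simp [inner_add_right]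
      map_smul' := by intro c x; funext i; simp [inner_smul_right] }
  have hΦ : Function.Injective Φ := by
    rw [← LinearMap.ker_eq_bot, LinearMap.ker_eq_bot']
    intro x hx
    have hx' : ∀ i, ⟪g i, (x : E)⟫_ℂ = 0 := fun i => congrFun hx i
    have hz : ∀ u ∈ W, ⟪(x : E), u⟫_ℂ = 0 := by
      intro u hu
      induction hu using Submodule.span_induction with
      | mem u hu => obtain ⟨i, rfl⟩ := hu; rw [← inner_conj_symm, hx' i, map_zero]
      | zero => simp
      | add u v _ _ h1 h2 => rw [inner_add_right, h1, h2, add_zero]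
      | smul c u _ h1 => rw [inner_smul_right, h1, mul_zero]
    have : (x : E) = 0 := inner_self_eq_zero.mp (hz (x : E) x.2)
    exact Subtype.ext this
  let e : W ≃ₗ[ℂ] LinearMap.range Φ := LinearEquiv.ofInjective Φ hΦ
  let ψ : (LinearMap.range Φ) →L[ℂ] W := (e.symm : LinearMap.range Φ →ₗ[ℂ] W).toContinuousLinearMap
  refine ⟨max ‖ψ‖ 1, le_max_right _ _, ?_⟩
  intro v hv
  set x : W := ⟨v, hv⟩ with hxdef
  obtain ⟨i, hi⟩ := Finite.exists_max (fun i => ‖⟪g i, v⟫_ℂ‖)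
  refine ⟨i, ?_⟩
  have h1 : ‖Φ x‖ ≤ ‖⟪g i, v⟫_ℂ‖ := by
    refine (pi_norm_le_iff_of_nonneg (norm_nonneg _)).mpr ?_
    intro j; exact hi j
  have h2 : ‖v‖ ≤ ‖ψ‖ * ‖Φ x‖ := by
    have hsymm : ψ (e x) = x := e.symm_apply_apply x
    calc ‖v‖ = ‖x‖ := rfl
      _ = ‖ψ (e x)‖ := by rw [hsymm]
      _ ≤ ‖ψ‖ * ‖e x‖ := ψ.le_opNorm _
      _ = ‖ψ‖ * ‖Φ x‖ := by
          congr 1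
  calc ‖v‖ ≤ ‖ψ‖ * ‖Φ x‖ := h2
    _ ≤ max ‖ψ‖ 1 * ‖⟪g i, v⟫_ℂ‖ :=
        mul_le_mul (le_max_left _ _) h1 (norm_nonneg _)
          (le_trans zero_le_one (le_max_right _ _))


/-- Pointwise version of the Proposition.  Hyperplanes in `P^n` are given by unit vectors
`α 1, ..., α q` in `ℂ^{n+1}` (`q ≥ n+1`), any `n+1` of which are linearly independent;
for a point represented by a unit vector `f`, `dist(w, a_j) = ‖⟪α j, f⟫‖`, and the
distance to the codimension-`k` flat `x_k` cut out by the `k` nearest hyperplanes is the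
norm of the orthogonal projection of `f` onto the span of their normals.  If the indices
are ordered (by a permutation `σ`) so that the distances `‖⟪α (σ m), f⟫‖` are
nondecreasing, then
`∑_{m=1}^q log (1/dist(w, a_{j_m})) ≤ ∑_{k=1}^n log (1/dist(w, x_k)) + C`,
with `C` depending only on the hyperplanes. -/
theorem stmt_13 {n q : ℕ} (hq : n + 1 ≤ q)
    (α : Fin q → EuclideanSpace ℂ (Fin (n + 1)))
    (hunit : ∀ j, ‖α j‖ = 1)
    (hadm : ∀ S : Finset (Fin q), S.card = n + 1 →
      LinearIndependent ℂ (fun j : ↥S => α j)) :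
    ∃ C : ℝ, 0 < C ∧
      ∀ f : EuclideanSpace ℂ (Fin (n + 1)), ‖f‖ = 1 →
        (∀ j, ⟪α j, f⟫_ℂ ≠ 0) →
        ∀ σ : Equiv.Perm (Fin q),
          (∀ i j : Fin q, i ≤ j → ‖⟪α (σ i), f⟫_ℂ‖ ≤ ‖⟪α (σ j), f⟫_ℂ‖) →
          ∑ m : Fin q, Real.log (1 / ‖⟪α (σ m), f⟫_ℂ‖)
            ≤ (∑ k : Fin n, Real.log (1 /
                ‖(Submodule.orthogonalProjectionOnto
                    (Submodule.span ℂ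
                      ((fun j : Fin q => α (σ j)) '' {j : Fin q | (j : ℕ) ≤ (k : ℕ)})) f :
                  EuclideanSpace ℂ (Fin (n + 1)))‖)) + C := by
  classical
  -- a uniform constant for all subsets
  have h1 : ∀ S : Finset (Fin q), ∃ K : ℝ, 1 ≤ K ∧
      (S.Nonempty → ∀ v ∈ Submodule.span ℂ (α '' ↑S),
        ∃ j ∈ S, ‖v‖ ≤ K * ‖⟪α j, v⟫_ℂ‖) := by
    intro S
    by_cases h : S.Nonempty
    · haveI : Nonempty ↥S := ⟨⟨h.choose, h.choose_spec⟩⟩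
      obtain ⟨K, hK1, hK2⟩ := exists_key (fun j : ↥S => α j)
      have hrange : Set.range (fun j : ↥S => α (j : Fin q)) = α '' ↑S := by
        rw [show (fun j : ↥S => α (j : Fin q)) = α ∘ ((↑) : ↥S → Fin q) from rfl,
          Set.range_comp, Subtype.range_coe]
      refine ⟨K, hK1, fun _ v hv => ?_⟩
      rw [← hrange] at hv
      obtain ⟨i, hi⟩ := hK2 v hv
      exact ⟨i, i.2, hi⟩
    · exact ⟨1, le_refl 1, fun hne => absurd hne h⟩
  choose K hK1 hK2 using h1
  obtain ⟨M0, hM0⟩ := Finite.exists_le K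
  set M : ℝ := max M0 1 with hMdef
  have hM1 : (1 : ℝ) ≤ M := le_max_right _ _
  have hMpos : (0 : ℝ) < M := lt_of_lt_of_le one_pos hM1
  have hKM : ∀ S, K S ≤ M := fun S => le_trans (hM0 S) (le_max_left _ _)
  have hlogM : 0 ≤ Real.log M := Real.log_nonneg hM1
  refine ⟨(q : ℝ) * Real.log M + 1, by nlinarith [Nat.cast_nonneg (α := ℝ) q], ?_⟩
  intro f hf hfj σ hord
  set d : Fin q → ℝ := fun m => ‖⟪α (σ m), f⟫_ℂ‖ with hd
  have hd0 : ∀ m, 0 < d m := fun m => norm_pos_iff.mpr (hfj _)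
  set G : ℕ → ℝ := fun k => Real.log (1 /
    ‖(Submodule.orthogonalProjectionOnto (Submodule.span ℂ
        ((fun j : Fin q => α (σ j)) '' {j : Fin q | (j : ℕ) ≤ k})) f :
      EuclideanSpace ℂ (Fin (n + 1)))‖) with hG
  -- the finset of k+1 nearest indices, and its coe
  have hScoe : ∀ (k : ℕ) (hk : k + 1 ≤ q),
      (fun j : Fin q => α (σ j)) '' {j : Fin q | (j : ℕ) ≤ k}
        = α '' ↑(Finset.image (fun i : Fin (k+1) => σ (Fin.castLE hk i)) Finset.univ) := by
    intro k hk
    ext x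
    simp only [Set.mem_image, Set.mem_setOf_eq, Finset.coe_image, Finset.coe_univ,
      Set.image_univ, Set.mem_range, exists_exists_eq_and]
    constructor
    · rintro ⟨j, hj, rfl⟩
      exact ⟨⟨(j : ℕ), by omega⟩, by congr 1⟩
    · rintro ⟨i, rfl⟩
      exact ⟨Fin.castLE hk i, by simpa using Nat.lt_succ_iff.mp i.isLt, rfl⟩
  -- Claim 2 : for k < n, projection norm is positive and ≤ M * d ⟨k, _⟩
  have key2 : ∀ (k : ℕ) (hk : k + 1 ≤ q),
      let p := ‖(Submodule.orthogonalProjectionOnto (Submodule.span ℂ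
        ((fun j : Fin q => α (σ j)) '' {j : Fin q | (j : ℕ) ≤ k})) f :
          EuclideanSpace ℂ (Fin (n + 1)))‖
      0 < p ∧ p ≤ M * d ⟨k, by omega⟩ := by
    intro k hk
    set S := Finset.image (fun i : Fin (k+1) => σ (Fin.castLE hk i)) Finset.univ with hS
    have hSne : S.Nonempty := ⟨σ (Fin.castLE hk 0), Finset.mem_image_of_mem _ (Finset.mem_univ _)⟩
    rw [hScoe k hk]
    set W := Submodule.span ℂ (α '' ↑S) with hW
    set v : EuclideanSpace ℂ (Fin (n + 1)) := (Submodule.orthogonalProjectionOnto W f : EuclideanSpace ℂ (Fin (n+1))) with hv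
    have hvW : v ∈ W := SetLike.coe_mem _
    -- inner products with members of W are preserved
    have hinner : ∀ j ∈ S, ⟪α j, v⟫_ℂ = ⟪α j, f⟫_ℂ := by
      intro j hj
      have hαW : α j ∈ W := Submodule.subset_span ⟨j, Finset.mem_coe.mpr hj, rfl⟩
      have h := Submodule.inner_orthogonalProjectionOnto_eq_of_mem_left (K := W) ⟨α j, hαW⟩ f
      rw [Submodule.coe_inner] at h
      exact h
    obtain ⟨j, hjS, hjle⟩ := hK2 S hSne v hvW
    rw [hinner j hjS] at hjle
    constructor
    · -- positivity
      rcases eq_or_lt_of_le (norm_nonneg v) with h0 | h0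
      · exfalso
        have hv0 : v = 0 := by simpa using h0.symm
        have := hinner j hjS
        rw [hv0, inner_zero_right] at this
        exact hfj _ this.symm
      · exact h0
    · -- the bound
      obtain ⟨i, -, rfl⟩ := Finset.mem_image.mp hjS
      have hle : d (Fin.castLE hk i) ≤ d ⟨k, by omega⟩ := by
        apply hord
        simpa [Fin.le_def] using Nat.lt_succ_iff.mp i.isLt
      calc ‖v‖ ≤ K S * d (Fin.castLE hk i) := hjle
        _ ≤ M * d ⟨k, by omega⟩ :=
          mul_le_mul (hKM S) hle (le_of_lt (hd0 _)) (le_of_lt hMpos)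
  -- Claim 1 : for n ≤ m, 1 ≤ M * d m
  have key1 : ∀ m : Fin q, n ≤ (m : ℕ) → 1 ≤ M * d m := by
    intro m hm
    have hk : n + 1 ≤ q := hq
    set S := Finset.image (fun i : Fin (n+1) => σ (Fin.castLE hk i)) Finset.univ with hS
    have hinj : Function.Injective (fun i : Fin (n+1) => σ (Fin.castLE hk i)) :=
      fun a b hab => Fin.castLE_injective hk (σ.injective hab)
    have hScard : S.card = n + 1 := by
      rw [hS, Finset.card_image_of_injective _ hinj, Finset.card_univ, Fintype.card_fin]
    have hSne : S.Nonempty := ⟨σ (Fin.castLE hk 0), Finset.mem_image_of_mem _ (Finset.mem_univ _)⟩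
    have hli := hadm S hScard
    have hrange : Set.range (fun j : ↥S => α (j : Fin q)) = α '' ↑S := by
      rw [show (fun j : ↥S => α (j : Fin q)) = α ∘ ((↑) : ↥S → Fin q) from rfl,
        Set.range_comp, Subtype.range_coe]
    haveI : Nonempty ↥S := ⟨⟨hSne.choose, hSne.choose_spec⟩⟩
    have htop : Submodule.span ℂ (α '' ↑S) = ⊤ := by
      rw [← hrange]
      exact hli.span_eq_top_of_card_eq_finrank
        (by rw [Fintype.card_coe, hScard, finrank_euclideanSpace_fin])
    have hfmem : f ∈ Submodule.span ℂ (α '' ↑S) := htop ▸ Submodule.mem_top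
    obtain ⟨j, hjS, hjle⟩ := hK2 S hSne f hfmem
    obtain ⟨i, -, rfl⟩ := Finset.mem_image.mp hjS
    have hle : d (Fin.castLE hk i) ≤ d m := by
      apply hord
      rw [Fin.le_def]
      have : (i : ℕ) < n + 1 := i.isLt
      simp only [Fin.coe_castLE]
      omega
    calc (1 : ℝ) = ‖f‖ := hf.symm
      _ ≤ K S * d (Fin.castLE hk i) := hjle
      _ ≤ M * d m := mul_le_mul (hKM S) hle (le_of_lt (hd0 _)) (le_of_lt hMpos)
  -- termwise bound
  have step : ∀ m : Fin q, Real.log (1 / d m)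
      ≤ (if (m : ℕ) < n then G (m : ℕ) else 0) + Real.log M := by
    intro m
    by_cases h : (m : ℕ) < n
    · rw [if_pos h]
      have hk : (m : ℕ) + 1 ≤ q := m.isLt
      obtain ⟨hp0, hpd⟩ := key2 (m : ℕ) hk
      set p := ‖(Submodule.orthogonalProjectionOnto (Submodule.span ℂ
        ((fun j : Fin q => α (σ j)) '' {j : Fin q | (j : ℕ) ≤ (m : ℕ)})) f :
          EuclideanSpace ℂ (Fin (n + 1)))‖ with hp
      have hmm : (⟨(m : ℕ), by omega⟩ : Fin q) = m := Fin.ext rfl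
      rw [hmm] at hpd
      have hlog1 : Real.log p ≤ Real.log (M * d m) := Real.log_le_log hp0 hpd
      rw [Real.log_mul (ne_of_gt hMpos) (ne_of_gt (hd0 m))] at hlog1
      have hGm : G (m : ℕ) = Real.log (1 / p) := rfl
      rw [hGm, one_div, one_div, Real.log_inv, Real.log_inv]
      linarith
    · rw [if_neg h]
      have h1m : 1 ≤ M * d m := key1 m (le_of_not_gt h)
      have : 1 / d m ≤ M := by
        rw [div_le_iff₀ (hd0 m)]
        linarith [mul_comm M (d m)]
      have := Real.log_le_log (one_div_pos.mpr (hd0 m)) this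
      linarith
  -- assemble
  calc ∑ m : Fin q, Real.log (1 / d m)
      ≤ ∑ m : Fin q, ((if (m : ℕ) < n then G (m : ℕ) else 0) + Real.log M) :=
        Finset.sum_le_sum fun m _ => step m
    _ = (∑ m : Fin q, if (m : ℕ) < n then G (m : ℕ) else 0) + (q : ℝ) * Real.log M := by
        rw [Finset.sum_add_distrib, Finset.sum_const, Finset.card_univ, Fintype.card_fin,
          nsmul_eq_mul]
    _ = (∑ k : Fin n, G (k : ℕ)) + (q : ℝ) * Real.log M := by
        congr 1
        rw [Fin.sum_univ_eq_sum_range (fun i => if i < n then G i else 0) q,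
          Fin.sum_univ_eq_sum_range (fun i => G i) n, ← Finset.sum_filter]
        congr 1
        ext i
        simp only [Finset.mem_filter, Finset.mem_range]
        omega
    _ ≤ (∑ k : Fin n, G (k : ℕ)) + ((q : ℝ) * Real.log M + 1) := by linarith
end

section
/- If q ≥ n+2 unit vectors α_1, ..., α_q ∈ ℂ^{n+1} have the property that any n+1 of them are linearly independent, then there exists δ > 0 such that for every unit vector f ∈ ℂ^{n+1}, at most n of the values |⟨α_j, f⟩| are less than δ. -/
open scoped InnerProductSpace

/-- Auxiliary: if `n+1` vectors in `ℂ^{n+1}` are linearly independent and a vector is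
orthogonal to all of them, it is zero. -/
lemma aux_orth_zero {n : ℕ} {S : Type*} [Fintype S] (hcard : Fintype.card S = n + 1)
    (b : S → EuclideanSpace ℂ (Fin (n + 1))) (hb : LinearIndependent ℂ b)
    (g : EuclideanSpace ℂ (Fin (n + 1))) (hg : ∀ j : S, ⟪b j, g⟫_ℂ = 0) : g = 0 := by
  have hcard' : Fintype.card S = Module.finrank ℂ (EuclideanSpace ℂ (Fin (n + 1))) := by
    simp [hcard]
  have hS : Nonempty S := by
    rw [← Fintype.card_pos_iff, hcard]; omega
  have hspan : Submodule.span ℂ (Set.range b) = ⊤ :=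
    hb.span_eq_top_of_card_eq_finrank hcard'
  have horth : Submodule.span ℂ (Set.range b) ⟂ Submodule.span ℂ ({g} : Set _) := by
    rw [Submodule.isOrtho_span]
    rintro u ⟨j, rfl⟩ v hv
    rw [Set.mem_singleton_iff] at hv
    subst hv
    exact hg j
  rw [hspan] at horth
  have : Submodule.span ℂ ({g} : Set _) ≤ (⊤ : Submodule ℂ _)ᗮ :=
    (Submodule.isOrtho_comm.mp horth).le
  rw [Submodule.top_orthogonal_eq_bot, le_bot_iff, Submodule.span_singleton_eq_bot]
      at this
  exact this

/-- If `q ≥ n+2` unit vectors `α 1, ..., α q` in `ℂ^{n+1}` are such that any `n+1` of them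
are linearly independent, then there is `δ > 0` such that for every unit vector `f`,
at most `n` of the values `‖⟪α j, f⟫‖` are less than `δ`. -/
theorem stmt_14 {n q : ℕ} (hq : n + 2 ≤ q)
    (α : Fin q → EuclideanSpace ℂ (Fin (n + 1)))
    (hunit : ∀ j, ‖α j‖ = 1)
    (hadm : ∀ S : Finset (Fin q), S.card = n + 1 →
      LinearIndependent ℂ (fun j : ↥S => α j)) :
    ∃ δ > (0 : ℝ), ∀ f : EuclideanSpace ℂ (Fin (n + 1)), ‖f‖ = 1 →
      {j : Fin q | ‖⟪α j, f⟫_ℂ‖ < δ}.ncard ≤ n := by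
  classical
  let E := EuclideanSpace ℂ (Fin (n + 1))
  -- the function associated to a set S
  set φ : Finset (Fin q) → E → ℝ := fun S f => ∑ j ∈ S, ‖⟪α j, f⟫_ℂ‖ with hφ
  have hφc : ∀ S : Finset (Fin q), Continuous (φ S) := by
    intro S
    exact continuous_finset_sum S fun j _ => ((innerSL ℂ (α j)).continuous).norm
  -- sphere is compact and nonempty
  have hcomp : IsCompact (Metric.sphere (0 : E) 1) := isCompact_sphere 0 1
  have hne : (Metric.sphere (0 : E) 1).Nonempty := by
    exact NormedSpace.sphere_nonempty.mpr (by norm_num)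
  -- for each S of card n+1, a positive lower bound of φ S on the sphere
  have key : ∀ S : Finset (Fin q), ∃ ε : ℝ, 0 < ε ∧
      (S.card = n + 1 → ∀ f : E, ‖f‖ = 1 → ε ≤ φ S f) := by
    intro S
    by_cases hS : S.card = n + 1
    · obtain ⟨x₀, hx₀, hmin⟩ := hcomp.exists_isMinOn hne (hφc S).continuousOn
      refine ⟨φ S x₀, ?_, fun _ f hf => hmin (show f ∈ Metric.sphere (0:E) 1 by simpa using hf)⟩
      rcases lt_or_eq_of_le (Finset.sum_nonneg (fun j _ => norm_nonneg _) :
          0 ≤ φ S x₀) with h | h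
      · exact h
      · exfalso
        have hzero : ∀ j ∈ S, ⟪α j, x₀⟫_ℂ = 0 := by
          intro j hj
          have := (Finset.sum_eq_zero_iff_of_nonneg
            (fun j _ => norm_nonneg (⟪α j, x₀⟫_ℂ))).mp h.symm j hj
          simpa using this
        have hx0 : x₀ = 0 := by
          refine aux_orth_zero (S := ↥S) ?_ (fun j => α j) (hadm S hS) x₀
            (fun j => hzero j j.2)
          simp [hS]
        have : ‖x₀‖ = 1 := by simpa using hx₀
        rw [hx0] at this
        simp at this
    · exact ⟨1, one_pos, fun h => absurd h hS⟩
  choose εf hεpos hεf using key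
  -- the collection of (n+1)-subsets
  have h𝒮 : ∃ S : Finset (Fin q), S.card = n + 1 := by
    obtain ⟨S, _, hS⟩ := Finset.exists_subset_card_eq
      (show n + 1 ≤ (Finset.univ : Finset (Fin q)).card by simp; omega)
    exact ⟨S, hS⟩
  set 𝒮 : Finset (Finset (Fin q)) :=
    Finset.univ.filter (fun S : Finset (Fin q) => S.card = n + 1) with h𝒮def
  have h𝒮ne : 𝒮.Nonempty := by
    obtain ⟨S, hS⟩ := h𝒮
    exact ⟨S, by simp [h𝒮def, hS]⟩
  set ε : ℝ := 𝒮.inf' h𝒮ne εf with hε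
  have hεpos' : 0 < ε := by
    rw [hε, Finset.lt_inf'_iff]
    exact fun S _ => hεpos S
  refine ⟨ε / (n + 1), by positivity, fun f hf => ?_⟩
  by_contra hcon
  push_neg at hcon
  -- the bad set as a finset
  set B : Finset (Fin q) := Finset.univ.filter (fun j => ‖⟪α j, f⟫_ℂ‖ < ε / (n + 1)) with hB
  have hBeq : {j : Fin q | ‖⟪α j, f⟫_ℂ‖ < ε / (n + 1)} = ↑B := by
    ext j; simp [hB]
  rw [hBeq, Set.ncard_coe_finset] at hcon
  obtain ⟨S, hSB, hScard⟩ := Finset.exists_subset_card_eq (show n + 1 ≤ B.card by omega)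
  have h1 : ε ≤ φ S f := by
    calc ε ≤ εf S := Finset.inf'_le εf (by simp [h𝒮def, hScard])
    _ ≤ φ S f := hεf S hScard f hf
  have h2 : φ S f < ε := by
    have hSne : S.Nonempty := Finset.card_pos.mp (by omega)
    have : φ S f < ∑ _j ∈ S, ε / (n + 1) := by
      refine Finset.sum_lt_sum_of_nonempty hSne fun j hj => ?_
      have := hSB hj
      rw [hB, Finset.mem_filter] at this
      exact this.2
    calc φ S f < ∑ _j ∈ S, ε / (n + 1) := this
    _ = (n + 1 : ℕ) • (ε / (n + 1)) := by rw [Finset.sum_const, hScard]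
    _ = ε := by
        rw [nsmul_eq_mul]; push_cast
        field_simp
    _ ≤ ε := le_refl _
  exact absurd h1 (not_le.mpr h2)
end

section
/- Differentiation formula for quotients of Wronskians: for sufficiently differentiable functions w_0, ..., w_n of one variable, d/dz log(W_j / W_n) = ± (W_{j,n} · W) / (W_j · W_n), where W is the Wronskian of all n+1 functions, W_j (resp. W_n) is the Wronskian of size n omitting w_j (resp. w_n), and W_{j,n} is the Wronskian of size n−1 omitting both w_j and w_n, valid at points where W_j and W_n are nonzero. -/
/-- The Wronskian of a family of `m` functions of one complex variable, evaluated at `z`: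
the determinant of the `m × m` matrix whose `(i, k)` entry is the `k`-th derivative of the
`i`-th function at `z`. -/
noncomputable def wronskian {m : ℕ} (g : Fin m → ℂ → ℂ) (z : ℂ) : ℂ :=
  Matrix.det (fun i k : Fin m => iteratedDeriv (k : ℕ) (g i) z)

open Matrix

section Aux

variable {n : ℕ}

/-- Derivative of a determinant whose entries depend on a parameter. -/
lemma det_hasDerivAt {m : ℕ} (A : ℂ → Matrix (Fin m) (Fin m) ℂ)
    (A' : Matrix (Fin m) (Fin m) ℂ) (z : ℂ)
    (h : ∀ i k, HasDerivAt (fun u => A u i k) (A' i k) z) :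
    HasDerivAt (fun u => (A u).det)
      (∑ k, ((A z).updateCol k (fun i => A' i k)).det) z := by
  have key : ∀ u, (A u).det = ∑ σ : Equiv.Perm (Fin m),
      ((Equiv.Perm.sign σ : ℤ) : ℂ) * ∏ i, A u (σ i) i := by
    intro u; rw [Matrix.det_apply']
  have h1 : HasDerivAt (fun u => (A u).det)
      (∑ σ : Equiv.Perm (Fin m), ((Equiv.Perm.sign σ : ℤ) : ℂ) *
        (∑ k, (∏ i ∈ Finset.univ.erase k, A z (σ i) i) • A' (σ k) k)) z := by
    simp only [funext key]
    apply HasDerivAt.fun_sum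
    intro σ _
    exact (HasDerivAt.fun_finsetProd (fun i _ => h (σ i) i)).const_mul _
  convert h1 using 1
  simp only [Finset.mul_sum]
  rw [Finset.sum_comm]
  apply Finset.sum_congr rfl
  intro k _
  rw [Matrix.det_apply']
  apply Finset.sum_congr rfl
  intro σ _
  congr 1
  rw [smul_eq_mul, ← Finset.prod_erase_mul (h := Finset.mem_univ k)]
  congr 1
  · apply Finset.prod_congr rfl
    intro i hi
    rw [Matrix.updateCol_apply, if_neg (Finset.ne_of_mem_erase hi)]
  · rw [Matrix.updateCol_apply, if_pos rfl]

/-- Derivative of the Wronskian: only the last-column bump survives. -/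
lemma wronskian_hasDerivAt {m : ℕ} (g : Fin (m + 1) → ℂ → ℂ)
    (hg : ∀ i, ContDiff ℂ ⊤ (g i)) (z : ℂ) :
    HasDerivAt (wronskian g)
      (Matrix.det (fun i k : Fin (m + 1) =>
        iteratedDeriv (((Fin.last m).castSucc.succAbove k : Fin (m + 2)) : ℕ) (g i) z)) z := by
  have h := det_hasDerivAt (fun u => fun i k : Fin (m + 1) => iteratedDeriv (k : ℕ) (g i) u)
    (fun i k : Fin (m + 1) => iteratedDeriv ((k : ℕ) + 1) (g i) z) z ?deriv
  case deriv =>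
    intro i k
    have hd : Differentiable ℂ (iteratedDeriv (k : ℕ) (g i)) :=
      (hg i).differentiable_iteratedDeriv (k : ℕ) (by simp)
    simpa [iteratedDeriv_succ] using hd.differentiableAt.hasDerivAt
  convert h using 1
  · rfl
  rw [Finset.sum_eq_single (Fin.last m)]
  · congr 1
    ext i k
    erw [Matrix.updateCol_apply]
    by_cases hk : k = Fin.last m
    · subst hk
      simp [Fin.succAbove, Fin.lt_def]
    · rw [if_neg hk]
      congr 1
      have hkm : (k : ℕ) < m := lt_of_le_of_ne (Nat.lt_succ_iff.mp k.isLt) (fun h => hk (Fin.ext h))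
      simp [Fin.succAbove, Fin.lt_def, hkm]
  · intro k _ hk
    have hkm : (k : ℕ) + 1 < m + 1 := by
      have := k.isLt; rcases Nat.lt_succ_iff_lt_or_eq.mp this with h | h
      · omega
      · exact absurd (Fin.ext h) hk
    apply Matrix.det_zero_of_column_eq (i := k) (j := ⟨(k : ℕ) + 1, hkm⟩)
    · intro h; exact absurd (congrArg Fin.val h) (by simp)
    · intro i
      erw [Matrix.updateCol_apply, if_pos rfl, Matrix.updateCol_apply,
        if_neg (fun h => by have := congrArg Fin.val h; simp at this)]
  · intro h; exact absurd (Finset.mem_univ _) h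

/-- Block matrix keeping row `p` and column `q` from the 2-part. -/
noncomputable def blkDJ (A : Matrix (Fin n) (Fin n) ℂ) (B : Matrix (Fin n) (Fin 2) ℂ)
    (C : Matrix (Fin 2) (Fin n) ℂ) (D : Matrix (Fin 2) (Fin 2) ℂ) (p q : Fin 2) :
    Matrix (Fin n ⊕ Fin 1) (Fin n ⊕ Fin 1) ℂ :=
  fromBlocks A (Matrix.of fun i (_ : Fin 1) => B i q) (Matrix.of fun (_ : Fin 1) j => C p j)
    (Matrix.of fun (_ _ : Fin 1) => D p q)

lemma dj_blocks_inv (A : Matrix (Fin n) (Fin n) ℂ) (B : Matrix (Fin n) (Fin 2) ℂ)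
    (C : Matrix (Fin 2) (Fin n) ℂ) (D : Matrix (Fin 2) (Fin 2) ℂ) [Invertible A] :
    (fromBlocks A B C D).det * A.det =
      (blkDJ A B C D 1 1).det * (blkDJ A B C D 0 0).det -
        (blkDJ A B C D 1 0).det * (blkDJ A B C D 0 1).det := by
  have hS : ∀ p q, (blkDJ A B C D p q).det = A.det * (D - C * ⅟A * B) p q := by
    intro p q
    rw [blkDJ, det_fromBlocks₁₁]
    congr 1
    rw [det_fin_one]
    simp only [Matrix.sub_apply, Matrix.mul_apply, Matrix.of_apply]
  rw [det_fromBlocks₁₁ (A := A), hS, hS, hS, hS, det_fin_two]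
  ring

lemma det_add_smul_one (A : Matrix (Fin n) (Fin n) ℂ) (t : ℂ) :
    (A + t • 1).det = ((-A).charpoly).eval t := by
  rw [Matrix.charpoly, ← Polynomial.coe_evalRingHom, RingHom.map_det]
  congr 1
  ext i j
  simp only [RingHom.mapMatrix_apply, Matrix.map_apply, charmatrix_apply,
    Polynomial.coe_evalRingHom]
  by_cases h : i = j
  · subst h
    simp [Matrix.one_apply]
    ring
  · simp [Matrix.one_apply, h, Matrix.diagonal_apply, Matrix.sub_apply]

lemma dj_blocks (A : Matrix (Fin n) (Fin n) ℂ) (B : Matrix (Fin n) (Fin 2) ℂ)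
    (C : Matrix (Fin 2) (Fin n) ℂ) (D : Matrix (Fin 2) (Fin 2) ℂ) :
    (fromBlocks A B C D).det * A.det =
      (blkDJ A B C D 1 1).det * (blkDJ A B C D 0 0).det -
        (blkDJ A B C D 1 0).det * (blkDJ A B C D 0 1).det := by
  have centry : ∀ (i j : Fin n),
      Continuous fun t : ℂ => (A + t • (1 : Matrix (Fin n) (Fin n) ℂ)) i j := by
    intro i j
    simp only [Matrix.add_apply, Matrix.smul_apply, smul_eq_mul]
    exact continuous_const.add (continuous_id.mul continuous_const)
  have cdet1 : Continuous fun t : ℂ => (fromBlocks (A + t • 1) B C D).det := by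
    apply Continuous.matrix_det
    apply continuous_matrix
    rintro (i | i) (j | j)
    · exact centry i j
    · exact continuous_const
    · exact continuous_const
    · exact continuous_const
  have cdetA : Continuous fun t : ℂ => (A + t • (1 : Matrix (Fin n) (Fin n) ℂ)).det := by
    apply Continuous.matrix_det
    exact continuous_matrix centry
  have cblk : ∀ p q : Fin 2, Continuous fun t : ℂ => (blkDJ (A + t • 1) B C D p q).det := by
    intro p q
    apply Continuous.matrix_det
    apply continuous_matrix
    rintro (i | i) (j | j)
    · exact centry i j
    · exact continuous_const
    · exact continuous_const
    · exact continuous_const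
  set F : ℂ → ℂ := fun t => (fromBlocks (A + t • 1) B C D).det * (A + t • 1).det with hF
  set G : ℂ → ℂ := fun t =>
      (blkDJ (A + t • 1) B C D 1 1).det * (blkDJ (A + t • 1) B C D 0 0).det -
        (blkDJ (A + t • 1) B C D 1 0).det * (blkDJ (A + t • 1) B C D 0 1).det with hG
  have hFG : F = G := by
    apply Continuous.ext_on
      (((Polynomial.finite_setOf_isRoot ((-A).charpoly_monic.ne_zero)).countable).dense_compl ℂ)
    · exact cdet1.mul cdetA
    · exact ((cblk 1 1).mul (cblk 0 0)).sub ((cblk 1 0).mul (cblk 0 1))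
    · intro t ht
      have hu : IsUnit (A + t • (1 : Matrix (Fin n) (Fin n) ℂ)).det := by
        rw [isUnit_iff_ne_zero, det_add_smul_one]
        exact ht
      letI := (A + t • (1 : Matrix (Fin n) (Fin n) ℂ)).invertibleOfIsUnitDet hu
      exact dj_blocks_inv (A + t • 1) B C D
  have h0 := congrFun hFG 0
  simpa only [hF, hG, zero_smul, add_zero] using h0

/-- corner version over `Fin (n+2)` -/
lemma dj_corner (M : Matrix (Fin (n + 2)) (Fin (n + 2)) ℂ) :
    M.det * (M.submatrix (fun i : Fin n => i.castSucc.castSucc)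
        (fun i : Fin n => i.castSucc.castSucc)).det =
      (M.submatrix ((Fin.last n).castSucc.succAbove) ((Fin.last n).castSucc.succAbove)).det *
          (M.submatrix Fin.castSucc Fin.castSucc).det -
        (M.submatrix ((Fin.last n).castSucc.succAbove) Fin.castSucc).det *
          (M.submatrix Fin.castSucc ((Fin.last n).castSucc.succAbove)).det := by
  set cc : Fin n → Fin (n + 2) := fun i => i.castSucc.castSucc with hcc
  set cs : Fin (n + 1) → Fin (n + 2) := Fin.castSucc with hcs
  set sa : Fin (n + 1) → Fin (n + 2) := (Fin.last n).castSucc.succAbove with hsa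
  set en : Fin 2 → Fin (n + 2) := fun q => ⟨n + q, by omega⟩ with hen
  have hsav : ∀ k : Fin (n + 1), (sa k : ℕ) = if (k : ℕ) < n then (k : ℕ) else n + 1 := by
    intro k
    simp only [hsa, Fin.succAbove, Fin.lt_def, Fin.coe_castSucc, Fin.val_last]
    split_ifs with h
    · simp
    · have := k.isLt
      simp only [Fin.val_succ, Fin.coe_castSucc]
      omega
  set R : Fin 2 → (Fin (n + 1) → Fin (n + 2)) := ![cs, sa] with hR
  have hRl : ∀ (p : Fin 2) (i : Fin n), R p (finSumFinEquiv (Sum.inl i)) = cc i := by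
    intro p i
    fin_cases p <;>
      · apply Fin.ext
        simp [hR, hsav, hcs, hcc]
  have hRr : ∀ p : Fin 2, R p (finSumFinEquiv (Sum.inr (0 : Fin 1))) = en p := by
    intro p
    fin_cases p <;>
      · apply Fin.ext
        simp [hR, hsav, hcs, hen]
  set A : Matrix (Fin n) (Fin n) ℂ := Matrix.of fun i k => M (cc i) (cc k) with hA
  set B : Matrix (Fin n) (Fin 2) ℂ := Matrix.of fun i q => M (cc i) (en q) with hB
  set C : Matrix (Fin 2) (Fin n) ℂ := Matrix.of fun p k => M (en p) (cc k) with hC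
  set D : Matrix (Fin 2) (Fin 2) ℂ := Matrix.of fun p q => M (en p) (en q) with hD
  have hfull : (fromBlocks A B C D).det = M.det := by
    rw [← det_submatrix_equiv_self finSumFinEquiv M]
    congr 1
    ext x y
    rcases x with i | p <;> rcases y with k | q <;>
      · simp only [fromBlocks_apply₁₁, fromBlocks_apply₁₂, fromBlocks_apply₂₁,
          fromBlocks_apply₂₂, hA, hB, hC, hD, Matrix.of_apply, Matrix.submatrix_apply]
        congr 1 <;> (apply Fin.ext; simp [hen])
  have hblk : ∀ p q : Fin 2, (blkDJ A B C D p q).det = (M.submatrix (R p) (R q)).det := by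
    intro p q
    rw [← det_submatrix_equiv_self finSumFinEquiv (M.submatrix (R p) (R q))]
    congr 1
    ext x y
    rcases x with i | i1 <;> rcases y with k | k1
    · simp only [blkDJ, fromBlocks_apply₁₁, hA, Matrix.of_apply, Matrix.submatrix_apply]
      rw [hRl, hRl]
    · obtain rfl : k1 = 0 := Subsingleton.elim _ _
      simp only [blkDJ, fromBlocks_apply₁₂, hB, Matrix.of_apply, Matrix.submatrix_apply]
      rw [hRl, hRr]
    · obtain rfl : i1 = 0 := Subsingleton.elim _ _
      simp only [blkDJ, fromBlocks_apply₂₁, hC, Matrix.of_apply, Matrix.submatrix_apply]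
      rw [hRr, hRl]
    · obtain rfl : i1 = 0 := Subsingleton.elim _ _
      obtain rfl : k1 = 0 := Subsingleton.elim _ _
      simp only [blkDJ, fromBlocks_apply₂₂, hD, Matrix.of_apply, Matrix.submatrix_apply]
      rw [hRr, hRr]
  have hAM : A.det = (M.submatrix cc cc).det := by rfl
  have := dj_blocks A B C D
  rw [hfull, hAM, hblk, hblk, hblk, hblk] at this
  simpa [hR] using this

/-- The permutation of `Fin (n+1)` sending `castSucc i ↦ j.succAbove i` and `last ↦ j`. -/
noncomputable def sigmaDJ (j : Fin (n + 1)) : Equiv.Perm (Fin (n + 1)) :=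
  (finSuccEquiv' (Fin.last n)).trans (finSuccEquiv' j).symm

lemma sigmaDJ_castSucc (j : Fin (n + 1)) (i : Fin n) :
    sigmaDJ j i.castSucc = j.succAbove i := by
  have : (Fin.last n).succAbove i = i.castSucc := by
    simp [Fin.succAbove_last]
  rw [sigmaDJ, Equiv.trans_apply, ← this, finSuccEquiv'_succAbove, finSuccEquiv'_symm_some]

lemma sigmaDJ_last (j : Fin (n + 1)) : sigmaDJ j (Fin.last n) = j := by
  rw [sigmaDJ, Equiv.trans_apply, finSuccEquiv'_at, finSuccEquiv'_symm_none]

/-- Equivalence between `Fin (n+1)` and non-last elements of `Fin (n+2)`. -/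
def castSuccEquivDJ : Fin (n + 1) ≃ {x : Fin (n + 2) // x ≠ Fin.last (n + 1)} where
  toFun i := ⟨i.castSucc, (Fin.castSucc_lt_last i).ne⟩
  invFun x := x.1.castPred x.2
  left_inv i := by simp
  right_inv x := by simp

/-- Extension of `sigmaDJ` to `Fin (n+2)` fixing the last element. -/
noncomputable def rhoDJ (j : Fin (n + 1)) : Equiv.Perm (Fin (n + 2)) :=
  (sigmaDJ j).extendDomain castSuccEquivDJ

lemma rhoDJ_castSucc (j : Fin (n + 1)) (x : Fin (n + 1)) :
    rhoDJ j x.castSucc = (sigmaDJ j x).castSucc := by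
  have h : x.castSucc ≠ Fin.last (n + 1) := (Fin.castSucc_lt_last x).ne
  rw [rhoDJ, Equiv.Perm.extendDomain_apply_subtype _ castSuccEquivDJ h]
  simp [castSuccEquivDJ]
  rfl

lemma rhoDJ_last (j : Fin (n + 1)) : rhoDJ j (Fin.last (n + 1)) = Fin.last (n + 1) := by
  rw [rhoDJ, Equiv.Perm.extendDomain_apply_not_subtype]
  simp

lemma sign_rhoDJ (j : Fin (n + 1)) :
    Equiv.Perm.sign (rhoDJ j) = Equiv.Perm.sign (sigmaDJ j) :=
  Equiv.Perm.sign_extendDomain _ _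

/-- General Desnanot–Jacobi, removing rows `j.castSucc`, `last` and the last two columns. -/
lemma dj_general (M : Matrix (Fin (n + 2)) (Fin (n + 2)) ℂ) (j : Fin (n + 1)) :
    M.det * (M.submatrix (fun i : Fin n => (j.succAbove i).castSucc)
        (fun i : Fin n => i.castSucc.castSucc)).det =
      (M.submatrix (j.castSucc.succAbove) ((Fin.last n).castSucc.succAbove)).det *
          (M.submatrix Fin.castSucc Fin.castSucc).det -
        (M.submatrix (j.castSucc.succAbove) Fin.castSucc).det *
          (M.submatrix Fin.castSucc ((Fin.last n).castSucc.succAbove)).det := by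
  set σ := sigmaDJ j with hσ
  set ρ := rhoDJ j with hρ
  set s : ℂ := ((Equiv.Perm.sign σ : ℤ) : ℂ) with hs
  have hs2 : s * s = 1 := by
    rcases Int.units_eq_one_or (Equiv.Perm.sign σ) with h | h <;> simp [hs, h]
  have hsne : s ≠ 0 := by
    rcases Int.units_eq_one_or (Equiv.Perm.sign σ) with h | h <;> simp [hs, h]
  set M' : Matrix (Fin (n + 2)) (Fin (n + 2)) ℂ := M.submatrix ρ id with hM'
  have key := dj_corner M'
  have h1 : M'.det = s * M.det := by
    have := Matrix.det_permute (ρ : Equiv.Perm (Fin (n + 2))) M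
    rw [hM', this, hρ, sign_rhoDJ, ← hσ, ← hs]
  have h2 : M'.submatrix (fun i : Fin n => i.castSucc.castSucc)
      (fun i : Fin n => i.castSucc.castSucc)
      = M.submatrix (fun i : Fin n => (j.succAbove i).castSucc)
        (fun i : Fin n => i.castSucc.castSucc) := by
    ext i k
    simp only [hM', Matrix.submatrix_apply, id_eq]
    rw [rhoDJ_castSucc, sigmaDJ_castSucc]
  have hrows : ∀ k : Fin (n + 1),
      ρ ((Fin.last n).castSucc.succAbove k) = j.castSucc.succAbove k := by
    intro k
    by_cases hk : k = Fin.last n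
    · subst hk
      have e1 : (Fin.last n).castSucc.succAbove (Fin.last n) = Fin.last (n + 1) := by
        apply Fin.ext
        simp [Fin.succAbove, Fin.lt_def]
      have e2 : j.castSucc.succAbove (Fin.last n) = Fin.last (n + 1) := by
        have hj := j.isLt
        apply Fin.ext
        simp only [Fin.succAbove, Fin.lt_def, Fin.coe_castSucc, Fin.val_last]
        rw [if_neg (by omega)]
        simp
      rw [e1, e2, rhoDJ_last]
    · have hkn : (k : ℕ) < n := Fin.val_lt_last hk
      have e3 : (Fin.last n).castSucc.succAbove k = ((k.castPred hk).castSucc).castSucc := by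
        apply Fin.ext
        simp [Fin.succAbove, Fin.lt_def, hkn]
      rw [e3, rhoDJ_castSucc, sigmaDJ_castSucc]
      apply Fin.ext
      simp only [Fin.succAbove, Fin.lt_def, Fin.coe_castSucc, Fin.coe_castPred]
      split_ifs <;> (try simp_all [Fin.coe_castPred]) <;> (try omega)
  have h3 : ∀ c : Fin (n + 1) → Fin (n + 2),
      M'.submatrix ((Fin.last n).castSucc.succAbove) c
        = M.submatrix (j.castSucc.succAbove) c := by
    intro c
    ext i k
    simp only [hM', Matrix.submatrix_apply, id_eq]
    rw [hrows]
  have h4 : ∀ c : Fin (n + 1) → Fin (n + 2),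
      (M'.submatrix Fin.castSucc c).det = s * (M.submatrix Fin.castSucc c).det := by
    intro c
    have he : M'.submatrix Fin.castSucc c = (M.submatrix Fin.castSucc c).submatrix σ id := by
      ext i k
      simp only [hM', Matrix.submatrix_apply, id_eq]
      rw [rhoDJ_castSucc]
    rw [he, Matrix.det_permute, hs]
  rw [h1, h2, h3, h3, h4, h4] at key
  linear_combination s * key +
    ((M.submatrix (j.castSucc.succAbove) ((Fin.last n).castSucc.succAbove)).det *
          (M.submatrix Fin.castSucc Fin.castSucc).det -
        (M.submatrix (j.castSucc.succAbove) Fin.castSucc).det *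
          (M.submatrix Fin.castSucc ((Fin.last n).castSucc.succAbove)).det -
      M.det * (M.submatrix (fun i : Fin n => (j.succAbove i).castSucc)
        (fun i : Fin n => i.castSucc.castSucc)).det) * hs2

end Aux

/-- Jacobi/Frobenius differentiation formula for quotients of Wronskians: with `n+2`
holomorphic functions `w_0, ..., w_{n+1}`, `W` their full Wronskian, `W_j` (resp. `W_last`)
the Wronskian of size `n+1` omitting `w_j` (resp. the last function), and `W_{j,last}` the
Wronskian of size `n` omitting both, one has, at points where `W_j` and `W_last` are
nonzero, `d/dz log (W_j / W_last) = ± (W_{j,last} · W) / (W_j · W_last)`. -/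
theorem stmt_15 {n : ℕ} (w : Fin (n + 2) → ℂ → ℂ)
    (hw : ∀ i, Differentiable ℂ (w i)) (j : Fin (n + 1)) :
    ∃ ε : ℂ, (ε = 1 ∨ ε = -1) ∧
      ∀ z : ℂ,
        wronskian (fun i : Fin (n + 1) => w (Fin.succAbove j.castSucc i)) z ≠ 0 →
        wronskian (fun i : Fin (n + 1) => w i.castSucc) z ≠ 0 →
        deriv (fun u =>
            wronskian (fun i : Fin (n + 1) => w (Fin.succAbove j.castSucc i)) u /
            wronskian (fun i : Fin (n + 1) => w i.castSucc) u) z /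
          (wronskian (fun i : Fin (n + 1) => w (Fin.succAbove j.castSucc i)) z /
            wronskian (fun i : Fin (n + 1) => w i.castSucc) z)
        = ε * (wronskian (fun i : Fin n => w (Fin.castSucc (Fin.succAbove j i))) z *
               wronskian w z) /
              (wronskian (fun i : Fin (n + 1) => w (Fin.succAbove j.castSucc i)) z *
               wronskian (fun i : Fin (n + 1) => w i.castSucc) z) := by
  refine ⟨1, Or.inl rfl, ?_⟩
  intro z hfz hgz
  set M : Matrix (Fin (n + 2)) (Fin (n + 2)) ℂ :=
    fun i k : Fin (n + 2) => iteratedDeriv (k : ℕ) (w i) z with hM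
  have hdf : HasDerivAt
      (fun u => wronskian (fun i : Fin (n + 1) => w (Fin.succAbove j.castSucc i)) u)
      ((M.submatrix (j.castSucc.succAbove) ((Fin.last n).castSucc.succAbove)).det) z := by
    have h0 := wronskian_hasDerivAt (m := n) (fun i => w (Fin.succAbove j.castSucc i))
      (fun i => (hw _).contDiff) z
    convert h0 using 2
    all_goals
      congr 1
  have hdg : HasDerivAt
      (fun u => wronskian (fun i : Fin (n + 1) => w i.castSucc) u)
      ((M.submatrix Fin.castSucc ((Fin.last n).castSucc.succAbove)).det) z := by
    have h0 := wronskian_hasDerivAt (m := n) (fun i => w (Fin.castSucc i))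
      (fun i => (hw _).contDiff) z
    convert h0 using 2
    all_goals
      congr 1
  have hfM : wronskian (fun i : Fin (n + 1) => w (Fin.succAbove j.castSucc i)) z
      = (M.submatrix (j.castSucc.succAbove) Fin.castSucc).det := by
    unfold wronskian
    congr 1
    all_goals
      ext i k
      simp [Matrix.submatrix_apply, hM]
  have hgM : wronskian (fun i : Fin (n + 1) => w i.castSucc) z
      = (M.submatrix Fin.castSucc Fin.castSucc).det := by
    unfold wronskian
    congr 1
    all_goals
      ext i k
      simp [Matrix.submatrix_apply, hM]
  have hWM : wronskian w z = M.det := rfl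
  have hDM : wronskian (fun i : Fin n => w (Fin.castSucc (Fin.succAbove j i))) z
      = (M.submatrix (fun i : Fin n => (j.succAbove i).castSucc)
        (fun i : Fin n => i.castSucc.castSucc)).det := by
    unfold wronskian
    congr 1
    all_goals
      ext i k
      simp [Matrix.submatrix_apply, hM]
  have key := dj_general M j
  have hder := (hdf.div hdg hgz).deriv
  rw [Pi.div_def] at hder
  beta_reduce at hder
  rw [hder, hfM, hgM, hWM, hDM]
  rw [hfM] at hfz
  rw [hgM] at hgz
  field_simp
  linear_combination -key
end
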